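/- Let X ∈ ℝ^{n×d} be full rank, y ∈ ℝ^n, and i ∈ {1..n} such that w*(−i) minimizing ‖X_{−i}w − y_{−i}‖² exists (picking any minimizer). Then det(X^⊤X)·(L(w*(−i)) − L(w*)) = (det(X^⊤X) − det(X_{−i}^⊤X_{−i})) · (x_i^⊤ w*(−i) − y_i)², where L(w) = ‖Xw − y‖², w* = argmin L, and X_{−i}, y_{−i} omit row/entry i. -/

import Mathlib

open Matrix Finset


lemma quad_zero {a c : ℝ} (ha : 0 ≤ a) (h : ∀ t : ℝ, 0 ≤ a * t ^ 2 + 2 * c * t) : c = 0 := by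
  have h1 := h (-c / (a + 1))
  have h2 : (0:ℝ) < a + 1 := by linarith
  have h3 : a * (-c / (a+1)) ^ 2 + 2 * c * (-c / (a+1)) = -(c^2 * (a + 2)) / (a+1)^2 := by
    field_simp; ring
  rw [h3] at h1
  have h4 : (0:ℝ) < (a+1)^2 := by positivity
  have h5 : 0 ≤ -(c^2 * (a+2)) := (div_nonneg_iff.mp h1).resolve_right (fun ⟨_, h⟩ => absurd h (not_le.mpr h4)) |>.1
  nlinarith [sq_nonneg c]

lemma stationary {n d : ℕ} (X : Matrix (Fin n) (Fin d) ℝ) (y : Fin n → ℝ)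
    (S : Finset (Fin n)) (w0 : Fin d → ℝ)
    (hmin : ∀ v, ∑ j ∈ S, (X.mulVec w0 j - y j) ^ 2 ≤ ∑ j ∈ S, (X.mulVec v j - y j) ^ 2)
    (u : Fin d → ℝ) : ∑ j ∈ S, X.mulVec u j * (X.mulVec w0 j - y j) = 0 := by
  have hquad : ∀ t : ℝ, 0 ≤ (∑ j ∈ S, (X.mulVec u j) ^ 2) * t ^ 2
      + 2 * (∑ j ∈ S, X.mulVec u j * (X.mulVec w0 j - y j)) * t := by
    intro t
    have key := hmin (w0 + t • u)
    have hexp : ∀ j, X.mulVec (w0 + t • u) j - y j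
        = (X.mulVec w0 j - y j) + t * X.mulVec u j := by
      intro j
      simp [Matrix.mulVec_add, Matrix.mulVec_smul]
      ring
    simp only [hexp] at key
    have : ∑ j ∈ S, ((X.mulVec w0 j - y j) + t * X.mulVec u j) ^ 2
        = ∑ j ∈ S, (X.mulVec w0 j - y j) ^ 2
          + ((∑ j ∈ S, (X.mulVec u j) ^ 2) * t ^ 2
            + 2 * (∑ j ∈ S, X.mulVec u j * (X.mulVec w0 j - y j)) * t) := by
      simp only [Finset.sum_mul, Finset.mul_sum, ← Finset.sum_add_distrib]
      exact Finset.sum_congr rfl fun j _ => by ring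
    rw [this] at key
    linarith
  exact quad_zero (Finset.sum_nonneg fun j _ => sq_nonneg _) hquad

noncomputable section

/-- The submatrix of `X` consisting of the rows indexed by the subset `S`. -/
def rowSub {n d : ℕ} (X : Matrix (Fin n) (Fin d) ℝ) (S : Finset (Fin n)) :
    Matrix {i // i ∈ S} (Fin d) ℝ :=
  X.submatrix (fun i => (i : Fin n)) id

/-- `X_S^⊤ X_S`. -/
def gram {n d : ℕ} (X : Matrix (Fin n) (Fin d) ℝ) (S : Finset (Fin n)) :
    Matrix (Fin d) (Fin d) ℝ :=
  (rowSub X S)ᵀ * rowSub X S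

/-- The total square loss `L(w) = ‖Xw − y‖²`. -/
def loss {n d : ℕ} (X : Matrix (Fin n) (Fin d) ℝ) (y : Fin n → ℝ) (w : Fin d → ℝ) : ℝ :=
  ∑ j, (X.mulVec w j - y j) ^ 2

/-- Leave-one-out loss identity:
`det(X^⊤X)(L(w*(−i)) − L(w*)) = (det(X^⊤X) − det(X_{−i}^⊤X_{−i})) (x_i^⊤w*(−i) − y_i)²`. -/
theorem leave_one_out_loss {n d : ℕ} (X : Matrix (Fin n) (Fin d) ℝ) (y : Fin n → ℝ)
    (hrank : X.rank = d) (i : Fin n) (w wi : Fin d → ℝ)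
    (hw : ∀ v, loss X y w ≤ loss X y v)
    (hwi : ∀ v, ∑ j ∈ Finset.univ.erase i, (X.mulVec wi j - y j) ^ 2
              ≤ ∑ j ∈ Finset.univ.erase i, (X.mulVec v j - y j) ^ 2) :
    (Xᵀ * X).det * (loss X y wi - loss X y w)
      = ((Xᵀ * X).det - (gram X (Finset.univ.erase i)).det) * (X.mulVec wi i - y i) ^ 2 := by
  set A := Xᵀ * X with hA
  -- invertibility
  have hunit : IsUnit A := by
    rw [← Matrix.mulVec_surjective_iff_isUnit]
    have hr : LinearMap.range A.mulVecLin = ⊤ := by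
      apply Submodule.eq_top_of_finrank_eq
      have : A.rank = d := by rw [hA, Matrix.rank_transpose_mul_self, hrank]
      simpa [Matrix.rank] using this
    exact LinearMap.range_eq_top.mp hr
  have hdet : IsUnit A.det := (Matrix.isUnit_iff_isUnit_det A).mp hunit
  set x : Fin d → ℝ := fun k => X i k with hx
  set r : ℝ := X.mulVec wi i - y i with hr
  set δ : Fin d → ℝ := wi - w with hδ
  have hstw := stationary X y Finset.univ w (fun v => hw v)
  have hsti := stationary X y (Finset.univ.erase i) wi hwi
  -- (★): for all u, ∑ j, Xu_j * Xδ_j = Xu_i * r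
  have hstar : ∀ u : Fin d → ℝ, ∑ j, X.mulVec u j * X.mulVec δ j = X.mulVec u i * r := by
    intro u
    have hδsplit : ∀ j, X.mulVec δ j = (X.mulVec wi j - y j) - (X.mulVec w j - y j) := by
      intro j; rw [hδ]
      simp [Matrix.mulVec_sub]
    calc ∑ j, X.mulVec u j * X.mulVec δ j
        = ∑ j, (X.mulVec u j * (X.mulVec wi j - y j) - X.mulVec u j * (X.mulVec w j - y j)) := by
          exact Finset.sum_congr rfl fun j _ => by rw [hδsplit]; ring
      _ = ∑ j, X.mulVec u j * (X.mulVec wi j - y j) - ∑ j, X.mulVec u j * (X.mulVec w j - y j) :=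
          Finset.sum_sub_distrib _ _
      _ = ∑ j, X.mulVec u j * (X.mulVec wi j - y j) := by rw [hstw u]; ring
      _ = X.mulVec u i * r := by
          rw [← Finset.sum_erase_add _ _ (Finset.mem_univ i), hsti u, zero_add, hr]
  -- A δ = r • x
  have hAδ : A.mulVec δ = r • x := by
    funext k
    have := hstar (Pi.single k 1)
    have huk : ∀ j, X.mulVec (Pi.single k 1) j = X j k := by
      intro j; simp [Matrix.mulVec_single]
    simp only [huk] at this
    have hlhs : ∑ j, X j k * X.mulVec δ j = A.mulVec δ k := by
      simp [hA, Matrix.mulVec, dotProduct, Matrix.mul_apply, Matrix.transpose_apply,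
        Finset.sum_mul, Finset.mul_sum]
      rw [Finset.sum_comm]
      exact Finset.sum_congr rfl fun j _ => Finset.sum_congr rfl fun l _ => by ring
    rw [hlhs] at this
    rw [this]; simp [hx, mul_comm]
  -- δ = r • A⁻¹ x
  have hδeq : δ = r • A⁻¹.mulVec x := by
    have h1 : A⁻¹.mulVec (A.mulVec δ) = δ := by
      rw [Matrix.mulVec_mulVec, Matrix.nonsing_inv_mul A hdet, Matrix.one_mulVec]
    rw [← h1, hAδ, Matrix.mulVec_smul]
  set s : ℝ := x ⬝ᵥ A⁻¹.mulVec x with hs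
  -- loss difference
  have hloss : loss X y wi - loss X y w = r ^ 2 * s := by
    have h2 : loss X y wi - loss X y w = ∑ j, X.mulVec δ j * X.mulVec δ j
        + 2 * ∑ j, X.mulVec δ j * (X.mulVec w j - y j) := by
      simp only [loss]
      rw [← Finset.sum_sub_distrib, Finset.mul_sum, ← Finset.sum_add_distrib]
      refine Finset.sum_congr rfl fun j _ => ?_
      have : X.mulVec wi j = X.mulVec δ j + X.mulVec w j := by
        rw [hδ]; simp [Matrix.mulVec_sub]
      rw [this]; ring
    rw [h2, hstw δ, hstar δ]
    have hδi : X.mulVec δ i = r * s := by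
      have h0 : X.mulVec δ i = x ⬝ᵥ δ := rfl
      rw [h0, hδeq, dotProduct_smul, smul_eq_mul, hs]
    rw [hδi]; ring
  -- determinant identity
  have hgram : gram X (Finset.univ.erase i) = A + Matrix.replicateCol Unit (-x) * Matrix.replicateRow Unit x := by
    funext j k
    have hL : gram X (Finset.univ.erase i) j k = ∑ l ∈ Finset.univ.erase i, X l j * X l k := by
      simp only [_root_.gram, rowSub, Matrix.mul_apply, Matrix.transpose_apply, Matrix.submatrix_apply,
        id]
      exact Finset.sum_coe_sort (Finset.univ.erase i) (fun l => X l j * X l k)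
    have hR : (A + Matrix.replicateCol Unit (-x) * Matrix.replicateRow Unit x) j k
        = (∑ l, X l j * X l k) - X i j * X i k := by
      simp [hA, Matrix.add_apply, Matrix.mul_apply, Matrix.replicateCol, Matrix.replicateRow, Matrix.transpose_apply,
        hx, sub_eq_add_neg]
    rw [hL, hR, ← Finset.sum_erase_add _ _ (Finset.mem_univ i)]
    ring
  have hdetgram : (gram X (Finset.univ.erase i)).det = A.det * (1 - s) := by
    have hcell : (Matrix.replicateRow Unit x * A⁻¹ * Matrix.replicateCol Unit (-x)) default default = -s := by
      simp [Matrix.mul_apply, Matrix.replicateRow, Matrix.replicateCol, hs, Matrix.mulVec, dotProduct,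
        Finset.mul_sum, Finset.sum_mul]
      rw [Finset.sum_comm]
      exact Finset.sum_congr rfl fun k _ => Finset.sum_congr rfl fun l _ => by ring
    rw [hgram, Matrix.det_add_replicateCol_mul_replicateRow hdet]
    have h1 : (1 + Matrix.replicateRow Unit x * A⁻¹ * Matrix.replicateCol Unit (-x)).det = 1 - s := by
      rw [Matrix.det_unique, Matrix.add_apply, Matrix.one_apply_eq, hcell]; ring
    rw [h1]
  rw [hloss, hdetgram]
  ring
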